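/- (Closedness of the Clarke gradient.) Let f : ℝ^m → ℝ be Lipschitz of rank K on a neighborhood of x, and let (x_i) and (ζ_i) be sequences in ℝ^m with x_i → x, ζ_i ∈ ∂f(x_i) for every i, and ζ_i → ζ. Then ζ ∈ ∂f(x). -/

import Mathlib

open RealInnerProductSpace Filter Topology

/-- The Clarke generalized directional derivative
`f°(p; v) = limsup_{q → p, t ↓ 0} (f(q + t v) − f(q)) / t`. -/
noncomputable def cDD {F : Type*} [NormedAddCommGroup F] [NormedSpace ℝ F]
    (f : F → ℝ) (p v : F) : ℝ :=
  Filter.limsup (fun qt : F × ℝ => (f (qt.1 + qt.2 • v) - f qt.1) / qt.2)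
    ((nhds p) ×ˢ (nhdsWithin 0 (Set.Ioi 0)))

/-- The Clarke generalized gradient `∂f(p) = {ζ : ⟨ζ, v⟩ ≤ f°(p; v) for all v}`. -/
noncomputable def clarkeGrad {F : Type*} [NormedAddCommGroup F] [InnerProductSpace ℝ F]
    (f : F → ℝ) (p : F) : Set F :=
  { ζ | ∀ v, ⟪ζ, v⟫ ≤ cDD f p v }

/-- (Closedness of the Clarke gradient.) If `f` is Lipschitz of rank `K`
on a neighborhood of `x`, `x_i → x`, `ζ_i ∈ ∂f(x_i)` and `ζ_i → ζ`, then `ζ ∈ ∂f(x)`. -/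
theorem clarke_gradient_closed {m : ℕ} (f : EuclideanSpace ℝ (Fin m) → ℝ)
    (x : EuclideanSpace ℝ (Fin m)) (K : NNReal)
    (hf : ∃ ε > (0 : ℝ), LipschitzOnWith K f (Metric.ball x ε))
    (xs ζs : ℕ → EuclideanSpace ℝ (Fin m)) (ζ : EuclideanSpace ℝ (Fin m))
    (hxs : Filter.Tendsto xs Filter.atTop (nhds x))
    (hζmem : ∀ i, ζs i ∈ clarkeGrad f (xs i))
    (hζs : Filter.Tendsto ζs Filter.atTop (nhds ζ)) :
    ζ ∈ clarkeGrad f x := by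
  obtain ⟨ε, hε, hlip⟩ := hf
  intro v
  set g : EuclideanSpace ℝ (Fin m) × ℝ → ℝ :=
    fun qt => (f (qt.1 + qt.2 • v) - f qt.1) / qt.2 with hgdef
  set τ : ℝ := ε / (2 * (‖v‖ + 1)) with hτdef
  have hτpos : 0 < τ := by positivity
  have hbound : ∀ q ∈ Metric.ball x (ε/2), ∀ t ∈ Set.Ioo (0:ℝ) τ,
      |g (q, t)| ≤ (K : ℝ) * ‖v‖ := by
    intro q hq t ht
    rw [Metric.mem_ball] at hq
    obtain ⟨ht0, htτ⟩ := ht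
    have hvpos : (0:ℝ) < ‖v‖ + 1 := by positivity
    have htv : t * ‖v‖ < ε / 2 := by
      have h1 : t * ‖v‖ ≤ t * (‖v‖ + 1) := by nlinarith
      have h2 : t * (‖v‖ + 1) < τ * (‖v‖ + 1) := by nlinarith
      have h3 : τ * (‖v‖ + 1) = ε / 2 := by
        rw [hτdef]; field_simp
      linarith
    have hq1 : q ∈ Metric.ball x ε := by
      rw [Metric.mem_ball]; linarith
    have hq2 : q + t • v ∈ Metric.ball x ε := by
      rw [Metric.mem_ball]
      have h1 : dist (q + t • v) x ≤ dist (q + t • v) q + dist q x := dist_triangle _ _ _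
      have h2 : dist (q + t • v) q = t * ‖v‖ := by
        rw [dist_eq_norm, add_sub_cancel_left, norm_smul, Real.norm_eq_abs,
          abs_of_pos ht0]
      linarith
    have hd := hlip.dist_le_mul _ hq2 _ hq1
    have hd2 : dist (q + t • v) q = t * ‖v‖ := by
      rw [dist_eq_norm, add_sub_cancel_left, norm_smul, Real.norm_eq_abs,
        abs_of_pos ht0]
    rw [Real.dist_eq, hd2] at hd
    have : |g (q, t)| = |f (q + t • v) - f q| / t := by
      simp [hgdef, abs_div, abs_of_pos ht0]
    rw [this]
    rw [div_le_iff₀ ht0]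
    calc |f (q + t • v) - f q| ≤ (K : ℝ) * (t * ‖v‖) := hd
      _ = (K : ℝ) * ‖v‖ * t := by ring
  have hev : ∀ p ∈ Metric.ball x (ε/2),
      ∀ᶠ qt in (nhds p) ×ˢ (nhdsWithin (0:ℝ) (Set.Ioi 0)), |g qt| ≤ (K : ℝ) * ‖v‖ := by
    intro p hp
    have hU : Metric.ball x (ε/2) ∈ nhds p := Metric.isOpen_ball.mem_nhds hp
    have hT : Set.Ioo (0:ℝ) τ ∈ nhdsWithin (0:ℝ) (Set.Ioi 0) :=
      Ioo_mem_nhdsGT_of_mem ⟨le_refl 0, hτpos⟩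
    filter_upwards [Filter.prod_mem_prod hU hT] with qt hqt
    exact hbound qt.1 hqt.1 qt.2 hqt.2
  have hcob : ∀ p ∈ Metric.ball x (ε/2),
      Filter.IsCoboundedUnder (· ≤ ·) ((nhds p) ×ˢ (nhdsWithin (0:ℝ) (Set.Ioi 0))) g := by
    intro p hp
    refine Filter.IsBoundedUnder.isCoboundedUnder_le ⟨-((K : ℝ) * ‖v‖), ?_⟩
    rw [Filter.eventually_map]
    filter_upwards [hev p hp] with qt hqt
    exact (abs_le.1 hqt).1
  have hxmem : x ∈ Metric.ball x (ε/2) := Metric.mem_ball_self (by linarith)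
  suffices h : ∀ c, cDD f x v < c → ⟪ζ, v⟫ ≤ c by
    by_contra hc
    push_neg at hc
    obtain ⟨c, h1, h2⟩ := exists_between hc
    exact absurd (h c h1) (not_le.2 h2)
  intro c hcgt
  have hbx : Filter.IsBoundedUnder (· ≤ ·)
      ((nhds x) ×ˢ (nhdsWithin (0:ℝ) (Set.Ioi 0))) g := by
    refine ⟨(K : ℝ) * ‖v‖, ?_⟩
    rw [Filter.eventually_map]
    filter_upwards [hev x hxmem] with qt hqt
    exact (abs_le.1 hqt).2
  have hlt : ∀ᶠ qt in (nhds x) ×ˢ (nhdsWithin (0:ℝ) (Set.Ioi 0)), g qt < c :=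
    Filter.eventually_lt_of_limsup_lt hcgt hbx
  rw [Filter.eventually_iff, Filter.mem_prod_iff] at hlt
  obtain ⟨U, hU, T, hT, hUT⟩ := hlt
  obtain ⟨U', hU'sub, hU'open, hxU'⟩ := mem_nhds_iff.1 hU
  have hcle : ∀ y ∈ U' ∩ Metric.ball x (ε/2), cDD f y v ≤ c := by
    intro y hy
    refine Filter.limsup_le_of_le (hcob y hy.2) ?_
    have hUy : U ∈ nhds y := Filter.mem_of_superset (hU'open.mem_nhds hy.1) hU'sub
    filter_upwards [Filter.prod_mem_prod hUy hT] with qt hqt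
    exact le_of_lt (hUT ⟨hqt.1, hqt.2⟩)
  have hmem : ∀ᶠ i in Filter.atTop, xs i ∈ U' ∩ Metric.ball x (ε/2) := by
    have h1 := hxs (hU'open.mem_nhds hxU')
    have h2 := hxs (Metric.isOpen_ball.mem_nhds hxmem)
    filter_upwards [h1, h2] with i hi1 hi2
    exact ⟨hi1, hi2⟩
  have htend : Filter.Tendsto (fun i => ⟪ζs i, v⟫) Filter.atTop (nhds ⟪ζ, v⟫) :=
    hζs.inner tendsto_const_nhds
  refine le_of_tendsto htend ?_
  filter_upwards [hmem] with i hi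
  exact le_trans (hζmem i v) (hcle (xs i) hi)
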